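/- Let C be a preadditive category with a zero object, and let X : Δ → C be a 1-Segal cosimplicial object such that X([0]) is a zero object. Then for every n ≥ 1, the morphisms X(q_j) : X([1]) → X([n]) for j = 1,…,n (induced by the monotone injections q_j : [1] → [n] with q_j(0) = j−1, q_j(1) = j) and X(p_i) : X([n]) → X([1]) for i = 1,…,n (induced by the monotone surjections p_i : [n] → [1] with p_i⁻¹(0) = {0,…,i−1}) satisfy X(p_i) ∘ X(q_j) = id_{X([1])} if i = j and 0 otherwise, and exhibit X([n]) as a biproduct of n copies of X([1]). -/

import Mathlib

/-!
STATEMENT 18: Let `C` be a preadditive category with a zero object and `X : Δ → C` a 1-Segal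
cosimplicial object with `X([0])` a zero object.  Then for every `n ≥ 1` the morphisms
`X(q_j) : X([1]) → X([n])` (induced by the monotone injections `q_j(0) = j-1`, `q_j(1) = j`)
and `X(p_i) : X([n]) → X([1])` (induced by the monotone surjections with `p_i⁻¹(0) = {0,…,i-1}`)
satisfy `X(p_i) ∘ X(q_j) = δ_{ij}` and exhibit `X([n])` as a biproduct of `n` copies of
`X([1])`, i.e. moreover `∑_j X(q_j) ∘ X(p_j) = id`.
(Here `i, j` range over `{1,…,n}`, reindexed below by `Fin n` via `i ↦ i+1`.)
-/

open CategoryTheory CategoryTheory.Limits Simplicial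

namespace Stmt18

/-- The inclusion `{a, a+1, …, a+m} ⊆ {0,…,n}`, as a map `[m] ⟶ [n]`, `t ↦ a + t`. -/
def interval (a m n : ℕ) (h : a + m ≤ n) : (⦋m⦌ : SimplexCategory) ⟶ ⦋n⦌ :=
  SimplexCategory.mkHom
    { toFun := fun t => ⟨a + t.1, by have := t.isLt; omega⟩
      monotone' := by
        intro s t hst
        have h2 : s.1 ≤ t.1 := hst
        simp only [Fin.mk_le_mk]
        omega }

/-- `q_{j+1} : [1] ⟶ [n]`, the monotone injection with `0 ↦ j`, `1 ↦ j+1` (for `j : Fin n`). -/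
def qF {n : ℕ} (j : Fin n) : (⦋1⦌ : SimplexCategory) ⟶ ⦋n⦌ :=
  interval j.1 1 n (by omega)

/-- `p_{i+1} : [n] ⟶ [1]`, the monotone surjection with `p⁻¹(0) = {0,…,i}` (for `i : Fin n`). -/
def pF {n : ℕ} (i : Fin n) : (⦋n⦌ : SimplexCategory) ⟶ ⦋1⦌ :=
  SimplexCategory.mkHom
    { toFun := fun t => ⟨if t.1 ≤ i.1 then 0 else 1, by split <;> omega⟩
      monotone' := by
        intro s t hst
        have h2 : s.1 ≤ t.1 := hst
        simp only [Fin.mk_le_mk]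
        split <;> split <;> omega }

end Stmt18

namespace Stmt18

lemma hom_ext' {m n : SimplexCategory} (f g : m ⟶ n)
    (h : ∀ t, (f.toOrderHom t).1 = (g.toOrderHom t).1) : f = g := by
  apply SimplexCategory.Hom.ext
  ext t; exact h t

@[simp] lemma interval_apply (a m n : ℕ) (h : a + m ≤ n) (t) :
    ((interval a m n h).toOrderHom t).1 = a + t.1 := rfl

@[simp] lemma pF_apply {n : ℕ} (i : Fin n) (t) :
    ((pF i).toOrderHom t).1 = if t.1 ≤ i.1 then 0 else 1 := rfl

@[simp] lemma qF_apply {n : ℕ} (j : Fin n) (t) :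
    ((qF j).toOrderHom t).1 = j.1 + t.1 := rfl

@[simp] lemma const_comp_const_apply (x : SimplexCategory) (c : Fin 2) (t) :
    (((SimplexCategory.const x ⦋0⦌ 0) ≫ (SimplexCategory.const ⦋0⦌ ⦋1⦌ c)).toOrderHom t).1 = c.1 := rfl

lemma comp_apply {x y z : SimplexCategory} (f : x ⟶ y) (g : y ⟶ z) (t) :
    ((f ≫ g).toOrderHom t) = g.toOrderHom (f.toOrderHom t) := rfl

lemma qF_pF_self {n : ℕ} (j : Fin n) : qF j ≫ pF j = 𝟙 (⦋1⦌ : SimplexCategory) := by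
  apply hom_ext'
  intro t
  have ht := t.isLt
  rw [comp_apply, pF_apply, qF_apply]
  simp only [SimplexCategory.len_mk] at ht
  fin_cases t <;> simp <;> omega

lemma qF_pF_ne {n : ℕ} (i j : Fin n) (h : i ≠ j) :
    qF j ≫ pF i = (SimplexCategory.const ⦋1⦌ ⦋0⦌ 0) ≫
      (SimplexCategory.const ⦋0⦌ ⦋1⦌ (if j.1 ≤ i.1 then 0 else 1)) := by
  apply hom_ext'
  intro t
  have ht := t.isLt
  have hij : i.1 ≠ j.1 := fun hh => h (Fin.ext hh)
  rw [comp_apply, pF_apply, qF_apply, const_comp_const_apply]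
  simp only [SimplexCategory.len_mk] at ht
  split <;> split <;> simp <;> omega

lemma pF_qF_one : pF (0 : Fin 1) ≫ qF (0 : Fin 1) = 𝟙 (⦋1⦌ : SimplexCategory) := by
  apply hom_ext'
  intro t
  have ht := t.isLt
  rw [comp_apply, qF_apply, pF_apply]
  simp only [SimplexCategory.len_mk] at ht
  fin_cases t <;> simp

lemma qF_castSucc {n : ℕ} (j : Fin n) :
    qF j.castSucc = qF j ≫ interval 0 n (n + 1) (by omega) := by
  apply hom_ext'
  intro t
  rw [comp_apply, interval_apply, qF_apply, qF_apply]
  simp [Fin.castSucc]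

lemma interval_pF_castSucc {n : ℕ} (j : Fin n) :
    interval 0 n (n + 1) (by omega) ≫ pF j.castSucc = pF j := by
  apply hom_ext'
  intro t
  rw [comp_apply, pF_apply, pF_apply, interval_apply]
  simp [Fin.castSucc]

lemma interval_pF_last (n : ℕ) :
    interval 0 n (n + 1) (by omega) ≫ pF (Fin.last n) =
      (SimplexCategory.const ⦋n⦌ ⦋0⦌ 0) ≫ (SimplexCategory.const ⦋0⦌ ⦋1⦌ 0) := by
  apply hom_ext'
  intro t
  have ht := t.isLt
  simp only [SimplexCategory.len_mk] at ht
  rw [comp_apply, pF_apply, interval_apply]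
  have : ((SimplexCategory.const ⦋n⦌ ⦋0⦌ 0 ≫ SimplexCategory.const ⦋0⦌ ⦋1⦌ 0).toOrderHom t).1 = 0 := rfl
  rw [this]
  simp [Fin.last]; omega

lemma interval_last {C' : Type*} [Category C'] (X : SimplexCategory ⥤ C')
    (n m : ℕ) (hm : m = 1) (h : n + m ≤ n + 1) :
    X.map (interval n m (n + 1) h) =
      eqToHom (by subst hm; rfl) ≫ X.map (qF (Fin.last n)) := by
  subst hm
  rw [eqToHom_refl, Category.id_comp]
  rfl

end Stmt18

open Stmt18 in
theorem stmt_18 {C : Type*} [Category C] [Preadditive C] [HasZeroObject C]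
    (X : SimplexCategory ⥤ C)
    -- X is 1-Segal:
    (h1Segal : ∀ (n k : ℕ) (_ : 0 < k) (_ : k < n),
      IsPushout
        (X.map (interval 0 0 (n - k) (by omega)))       -- {k} ↪ {k,…,n}
        (X.map (interval k 0 k (by omega)))             -- {k} ↪ {0,…,k}
        (X.map (interval k (n - k) n (by omega)))       -- {k,…,n} ↪ {0,…,n}
        (X.map (interval 0 k n (by omega))))            -- {0,…,k} ↪ {0,…,n}
    -- X([0]) is a zero object:
    (hX0 : IsZero (X.obj ⦋0⦌)) :
    ∀ (n : ℕ) (_ : 1 ≤ n),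
      -- `X(p_i) ∘ X(q_j) = id` if `i = j` and `0` otherwise:
      (∀ i j : Fin n,
        X.map (qF j) ≫ X.map (pF i) =
          if i = j then 𝟙 (X.obj ⦋1⦌) else 0) ∧
      -- and the `X(q_j)`, `X(p_i)` exhibit `X([n])` as a biproduct of `n` copies of `X([1])`:
      (∑ j : Fin n, X.map (pF j) ≫ X.map (qF j)) = 𝟙 (X.obj ⦋n⦌) := by
  -- a map factoring through [0] becomes zero
  have hzero : ∀ {x y : SimplexCategory}
      (f : x ⟶ ⦋0⦌) (g : (⦋0⦌ : SimplexCategory) ⟶ y),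
      X.map (f ≫ g) = 0 := by
    intro x y f g
    rw [X.map_comp]
    have : X.map f = 0 := hX0.eq_of_tgt _ _
    rw [this, zero_comp]
  have key : ∀ (n : ℕ) (i j : Fin n),
      X.map (qF j) ≫ X.map (pF i) = if i = j then 𝟙 (X.obj ⦋1⦌) else 0 := by
    intro n i j
    rw [← X.map_comp]
    by_cases h : i = j
    · subst h
      rw [qF_pF_self, X.map_id, if_pos rfl]
    · rw [if_neg h, qF_pF_ne i j h, hzero]
  have main : ∀ (n : ℕ), 1 ≤ n →
      (∑ j : Fin n, X.map (pF j) ≫ X.map (qF j)) = 𝟙 (X.obj ⦋n⦌) := by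
    intro n
    induction n with
    | zero => omega
    | succ n ih =>
      intro _
      rcases Nat.eq_zero_or_pos n with hn | hn
      · subst hn
        rw [Fin.sum_univ_one, ← X.map_comp, pF_qF_one, X.map_id]
      · have hP := h1Segal (n + 1) n hn (by omega)
        apply hP.hom_ext
        · -- inl side
          rw [interval_last X n (n + 1 - n) (by omega), Category.assoc, Category.assoc,
            cancel_epi]
          rw [Preadditive.comp_sum]
          simp only [← Category.assoc, key]
          rw [Category.comp_id]
          simp only [ite_comp, zero_comp, Category.id_comp]
          simp [Finset.sum_ite_eq']
        · -- inr side
          rw [Category.comp_id, Preadditive.comp_sum]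
          rw [Fin.sum_univ_castSucc]
          have hlast : X.map (interval 0 n (n + 1) (by omega)) ≫
              (X.map (pF (Fin.last n)) ≫ X.map (qF (Fin.last n))) = 0 := by
            rw [← Category.assoc, ← X.map_comp, interval_pF_last, hzero, zero_comp]
          rw [hlast, add_zero]
          have hterm : ∀ j : Fin n,
              X.map (interval 0 n (n + 1) (by omega)) ≫
                (X.map (pF j.castSucc) ≫ X.map (qF j.castSucc)) =
              (X.map (pF j) ≫ X.map (qF j)) ≫ X.map (interval 0 n (n + 1) (by omega)) := by
            intro j
            rw [← Category.assoc, ← X.map_comp, interval_pF_castSucc, qF_castSucc,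
              X.map_comp, Category.assoc]
          simp only [hterm]
          rw [← Preadditive.sum_comp, ih (by omega), Category.id_comp]
  intro n hn
  exact ⟨key n, main n hn⟩
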